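/- arXiv:1007.1500 — 2 statements merged into one kernel-verified Lean document; each statement's English description precedes it below -/
import Mathlib

section
/- Let a < 0, and let p_{a,0} = (y_{a,0}, y_{a,0}) with y_{a,0} = (1 + √(1 − 4a))/2 be the fixed point of the endomorphism φ_{a,0}. Then the unstable set of p_{a,0} is exactly W^u(p_{a,0}) = {(x, x² + a) : x ≥ a}. -/
open Filter Topology

/-- The degenerate Hénon endomorphism `φ_{a,0}(x,y) = (y, a + y²)`. -/
noncomputable def henonPhi0 (a : ℝ) : ℝ × ℝ → ℝ × ℝ :=
  fun p => (p.2, a + p.2 ^ 2)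

/-- The unstable set of a fixed point `p` of an endomorphism `F` of `ℝ²`: the set of points
`q` admitting a backward orbit `(qₙ)` with `q₀ = q`, `F(qₙ₊₁) = qₙ`, and `qₙ → p`. -/
def unstableSet (F : ℝ × ℝ → ℝ × ℝ) (p : ℝ × ℝ) : Set (ℝ × ℝ) :=
  {q : ℝ × ℝ | ∃ s : ℕ → ℝ × ℝ, s 0 = q ∧ (∀ n : ℕ, F (s (n + 1)) = s n) ∧
    Tendsto s atTop (𝓝 p)}

theorem stmt_13 (a : ℝ) (ha : a < 0) :
    unstableSet (henonPhi0 a)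
        ((1 + Real.sqrt (1 - 4 * a)) / 2, (1 + Real.sqrt (1 - 4 * a)) / 2) =
      {p : ℝ × ℝ | ∃ x : ℝ, a ≤ x ∧ p = (x, x ^ 2 + a)} := by
  set y₀ : ℝ := (1 + Real.sqrt (1 - 4 * a)) / 2 with hy₀def
  have hsq : Real.sqrt (1 - 4 * a) ^ 2 = 1 - 4 * a := Real.sq_sqrt (by linarith)
  have hs1 : 1 < Real.sqrt (1 - 4 * a) := by
    nlinarith [Real.sqrt_nonneg (1 - 4 * a)]
  have hy1 : 1 < y₀ := by rw [hy₀def]; linarith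
  have hy0 : 0 < y₀ := by linarith
  have hfix : y₀ ^ 2 = y₀ - a := by rw [hy₀def]; nlinarith [hsq]
  ext q
  constructor
  · rintro ⟨s, hs0, hstep, -⟩
    refine ⟨a + (s 2).2 ^ 2, by nlinarith [sq_nonneg (s 2).2], ?_⟩
    have h1 := hstep 0
    have h2 := hstep 1
    rw [← hs0, ← h1, ← h2]
    simp only [henonPhi0]
    exact Prod.ext rfl (by ring)
  · rintro ⟨x, hx, rfl⟩
    set t : ℕ → ℝ := fun n => Nat.rec x (fun _ p => Real.sqrt (p - a)) n with ht
    have ht0 : t 0 = x := rfl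
    have htsucc : ∀ n, t (n + 1) = Real.sqrt (t n - a) := fun n => rfl
    have hta : ∀ n, a ≤ t n := by
      intro n
      cases n with
      | zero => exact hx
      | succ m => have := Real.sqrt_nonneg (t m - a); rw [htsucc]; linarith
    have hsq' : ∀ n, t (n + 1) ^ 2 = t n - a := by
      intro n
      rw [htsucc]
      exact Real.sq_sqrt (by linarith [hta n])
    have htnn : ∀ n, 0 ≤ t (n + 1) := fun n => by rw [htsucc]; exact Real.sqrt_nonneg _
    have hcontr : ∀ n, |t (n + 1) - y₀| * y₀ ≤ |t n - y₀| := by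
      intro n
      have hprod : |t (n + 1) - y₀| * (t (n + 1) + y₀) = |t n - y₀| := by
        rw [← abs_of_nonneg (show (0:ℝ) ≤ t (n + 1) + y₀ by have := htnn n; linarith),
          ← abs_mul]
        congr 1
        linear_combination hsq' n - hfix
      calc |t (n + 1) - y₀| * y₀ ≤ |t (n + 1) - y₀| * (t (n + 1) + y₀) := by
            apply mul_le_mul_of_nonneg_left (by have := htnn n; linarith) (abs_nonneg _)
        _ = |t n - y₀| := hprod
    have hgeo : ∀ n, |t n - y₀| ≤ |x - y₀| * (1 / y₀) ^ n := by
      intro n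
      induction n with
      | zero => simp [ht0]
      | succ m ih =>
        have h1 := hcontr m
        have : |t (m + 1) - y₀| ≤ |t m - y₀| / y₀ := by
          rw [le_div_iff₀ hy0]; exact h1
        calc |t (m + 1) - y₀| ≤ |t m - y₀| / y₀ := this
          _ ≤ (|x - y₀| * (1 / y₀) ^ m) / y₀ := by gcongr
          _ = |x - y₀| * (1 / y₀) ^ (m + 1) := by
              rw [pow_succ]; ring
    have hlim0 : Tendsto (fun n => |x - y₀| * (1 / y₀) ^ n) atTop (𝓝 0) := by
      have hr0 : (0:ℝ) ≤ 1 / y₀ := by positivity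
      have hr1 : (1:ℝ) / y₀ < 1 := by rw [div_lt_one hy0]; linarith
      simpa using (tendsto_pow_atTop_nhds_zero_of_lt_one hr0 hr1).const_mul |x - y₀|
    have htlim : Tendsto t atTop (𝓝 y₀) := by
      rw [tendsto_iff_dist_tendsto_zero]
      simp only [Real.dist_eq]
      exact squeeze_zero (fun n => abs_nonneg _) hgeo hlim0
    refine ⟨fun n => (t n, t n ^ 2 + a), by simp only [ht0], ?_, ?_⟩
    · intro n
      simp only [henonPhi0]
      refine Prod.ext ?_ ?_
      · simp only
        rw [hsq' n]; ring
      · simp only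
        rw [hsq' n]; ring
    · have h2 : Tendsto (fun n => t n ^ 2 + a) atTop (𝓝 (y₀ ^ 2 + a)) :=
        ((htlim.pow 2).add_const a)
      have : y₀ ^ 2 + a = y₀ := by linarith [hfix]
      rw [this] at h2
      exact htlim.prodMk_nhds h2
end

section
/- For the parameter values a = −2, b = 0: the fixed point is p = p_{−2,0} = (2,2), and the point q = (−2, 2) satisfies q ≠ p, q ∈ W^u(p) (where the unstable set is defined via backward orbits), and φ_{−2,0}(q) = p. Hence q is a homoclinic point of p: it lies in the intersection of the unstable set of p and the stable set of p. -/
open Filter Topology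

/-- The stable set of a fixed point `p` of an endomorphism `F` of `ℝ²`: the set of points
whose forward orbit converges to `p`. -/
def stableSet (F : ℝ × ℝ → ℝ × ℝ) (p : ℝ × ℝ) : Set (ℝ × ℝ) :=
  {q : ℝ × ℝ | Tendsto (fun n : ℕ => F^[n] q) atTop (𝓝 p)}

lemma aux_unstable : ((-2, 2) : ℝ × ℝ) ∈ unstableSet (henonPhi0 (-2)) (2, 2) := by
  refine ⟨fun n => (2 * Real.cos (2 * Real.pi / 2 ^ (n + 1)),
      2 * Real.cos (2 * Real.pi / 2 ^ n)), ?_, ?_, ?_⟩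
  · have h1 : (2 * Real.pi / 2 ^ (0 + 1) : ℝ) = Real.pi := by norm_num
    have h2 : (2 * Real.pi / 2 ^ (0 : ℕ) : ℝ) = 2 * Real.pi := by norm_num
    simp [h1, h2, Real.cos_pi, Real.cos_two_pi]
  · intro n
    have hd : (2 * Real.pi / 2 ^ n : ℝ) = 2 * (2 * Real.pi / 2 ^ (n + 1)) := by
      rw [pow_succ]; ring
    have hc := Real.cos_two_mul (2 * Real.pi / 2 ^ (n + 1))
    simp only [henonPhi0, Prod.mk.injEq]
    constructor
    · trivial
    · rw [hd, hc]; ring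
  · have h0 : Tendsto (fun n : ℕ => (2 * Real.pi / 2 ^ n : ℝ)) atTop (𝓝 0) := by
      have : Tendsto (fun n : ℕ => ((1 / 2 : ℝ) ^ n)) atTop (𝓝 0) :=
        tendsto_pow_atTop_nhds_zero_of_lt_one (by norm_num) (by norm_num)
      have := this.const_mul (2 * Real.pi)
      simpa [mul_comm, div_eq_mul_inv, mul_assoc, inv_pow] using this
    have h0' : Tendsto (fun n : ℕ => (2 * Real.pi / 2 ^ (n + 1) : ℝ)) atTop (𝓝 0) :=
      h0.comp (tendsto_add_atTop_nat 1)
    have hcos : ∀ g : ℕ → ℝ, Tendsto g atTop (𝓝 0) →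
        Tendsto (fun n => 2 * Real.cos (g n)) atTop (𝓝 2) := by
      intro g hg
      have := (Real.continuous_cos.tendsto 0).comp hg
      simpa using (this.const_mul 2)
    exact (hcos _ h0').prodMk_nhds (hcos _ h0)

theorem stmt_14 :
    ((-2, 2) : ℝ × ℝ) ≠ ((2, 2) : ℝ × ℝ) ∧
    ((-2, 2) : ℝ × ℝ) ∈ unstableSet (henonPhi0 (-2)) (2, 2) ∧
    henonPhi0 (-2) (-2, 2) = (2, 2) ∧
    ((-2, 2) : ℝ × ℝ) ∈ unstableSet (henonPhi0 (-2)) (2, 2) ∩ stableSet (henonPhi0 (-2)) (2, 2) := by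
  refine ⟨by norm_num, aux_unstable, by norm_num [henonPhi0], aux_unstable, ?_⟩
  have key : ∀ n : ℕ, (henonPhi0 (-2))^[n + 1] (-2, 2) = (2, 2) := by
    intro n
    induction n with
    | zero => norm_num [henonPhi0]
    | succ k ih =>
      rw [Function.iterate_succ_apply', ih]
      norm_num [henonPhi0]
  have : Tendsto (fun n : ℕ => (henonPhi0 (-2))^[n] (-2, 2)) atTop (𝓝 (2, 2)) := by
    apply Tendsto.congr' (f₁ := fun _ : ℕ => ((2, 2) : ℝ × ℝ))
    · filter_upwards [eventually_ge_atTop 1] with n hn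
      obtain ⟨m, rfl⟩ := Nat.exists_eq_add_of_le hn
      simpa [add_comm] using (key m).symm
    · exact tendsto_const_nhds
  exact this
end
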